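/- Let G be a finite group, H a π-Hall subgroup of G, and A a normal subgroup of G such that A is a 2-group (or more generally a solvable group) and the image of H in G/A is pronormal in G/A. Then H is pronormal in G. -/

import Mathlib

open Pointwise

/-- `conjSub H g` is the conjugate subgroup `H^g = g⁻¹Hg`. -/
def conjSub {G : Type*} [Group G] (H : Subgroup G) (g : G) : Subgroup G :=
  MulAut.conj g⁻¹ • H

/-- `H` is pronormal: for every `g`, `H` and `H^g` are conjugate in `⟨H, H^g⟩`. -/
def IsPronormal {G : Type*} [Group G] (H : Subgroup G) : Prop :=
  ∀ g : G, ∃ x ∈ H ⊔ conjSub H g, conjSub H x = conjSub H g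


/-- `H` is a `π`-Hall subgroup: `|H|` is a `π`-number and its index a `π'`-number. -/
def IsPiHall {G : Type*} [Group G] (π : Set ℕ) (H : Subgroup G) : Prop :=
  (∀ p : ℕ, p.Prime → p ∣ Nat.card H → p ∈ π) ∧
  (∀ p : ℕ, p.Prime → p ∣ H.index → p ∉ π)

theorem mem_conjSub {G : Type*} [Group G] {H : Subgroup G} {g x : G} :
    x ∈ conjSub H g ↔ g * x * g⁻¹ ∈ H := by
  constructor
  · rintro ⟨h, hh, rfl⟩
    simpa [MulAut.conj, mul_assoc] using hh
  · intro hx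
    exact ⟨g * x * g⁻¹, hx, by simp [MulAut.conj, mul_assoc]⟩

theorem conjSub_conjSub {G : Type*} [Group G] (H : Subgroup G) (a b : G) :
    conjSub (conjSub H a) b = conjSub H (a * b) := by
  ext x; simp [mem_conjSub, mul_assoc]

theorem conjSub_self_mem {G : Type*} [Group G] {H : Subgroup G} {g : G} (hg : g ∈ H) :
    conjSub H g = H := by
  ext x; simp only [mem_conjSub]
  constructor
  · intro h
    have hx : x = g⁻¹ * (g * x * g⁻¹) * g := by group
    rw [hx]; exact H.mul_mem (H.mul_mem (H.inv_mem hg) h) hg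
  · intro h; exact H.mul_mem (H.mul_mem hg h) (H.inv_mem hg)

theorem conjSub_map {G G' : Type*} [Group G] [Group G'] (f : G →* G') (H : Subgroup G) (g : G) :
    (conjSub H g).map f = conjSub (H.map f) (f g) := by
  ext x
  simp only [Subgroup.mem_map, mem_conjSub]
  constructor
  · rintro ⟨y, hy, rfl⟩
    exact ⟨g * y * g⁻¹, hy, by simp [mul_assoc]⟩
  · rintro ⟨y, hy, hxy⟩
    refine ⟨g⁻¹ * y * g, by simpa [mul_assoc] using hy, ?_⟩
    simp only [map_mul, map_inv, hxy]
    group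

theorem conjSub_card {G : Type*} [Group G] (H : Subgroup G) (g : G) :
    Nat.card (conjSub H g) = Nat.card H :=
  Nat.card_congr (Subgroup.equivSMul (MulAut.conj g⁻¹) H).toEquiv.symm

theorem conjSub_le_of_le {G : Type*} [Group G] {H K : Subgroup G} (h : H ≤ K) (g : G) :
    conjSub H g ≤ conjSub K g := fun x hx => by
  rw [mem_conjSub] at *; exact h hx

theorem conjSub_index {G : Type*} [Group G] (H : Subgroup G) (g : G) :
    (conjSub H g).index = H.index := by
  have h : conjSub H g = Subgroup.comap (MulAut.conj g).toMonoidHom H := by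
    ext x; simp [mem_conjSub, MulAut.conj]
  rw [h]
  exact Subgroup.index_comap_of_surjective H (MulAut.conj g).surjective

open Subgroup MulAction in
theorem complement_conj {L : Type*} [Group L] [Finite L] (N K1 K2 : Subgroup L)
    [N.Normal] [IsMulCommutative N]
    (hcop : Nat.Coprime (Nat.card N) N.index)
    (h1 : IsComplement' N K1) (h2 : IsComplement' N K2) :
    ∃ n ∈ N, conjSub K1 n = K2 := by
  -- each complement gives a left transversal
  have mem_lt : ∀ K : Subgroup L, IsComplement' N K → IsComplement (K : Set L) (N : Set L) :=
    fun K hK => hK.symm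
  set T1 : N.LeftTransversal := ⟨(K1 : Set L), mem_lt K1 h1⟩
  set T2 : N.LeftTransversal := ⟨(K2 : Set L), mem_lt K2 h2⟩
  let mkq : ∀ (K : Subgroup L), IsComplement' N K → N.QuotientDiff :=
    fun K hK => Quotient.mk'' (⟨(K : Set L), mem_lt K hK⟩ : N.LeftTransversal)
  set α1 : N.QuotientDiff := mkq K1 h1
  set α2 : N.QuotientDiff := mkq K2 h2
  -- a complement is contained in the stabilizer of its class
  have hstab : ∀ (K : Subgroup L) (hK : IsComplement' N K),
      K ≤ stabilizer L (mkq K hK) := by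
    intro K hK k hk
    rw [mem_stabilizer_iff]
    show Quotient.map' _ _ _ = _
    rw [Quotient.map'_mk'']
    apply congrArg
    apply Subtype.ext
    show (MulOpposite.op k⁻¹) • (K : Set L) = (K : Set L)
    ext x
    simp only [Set.mem_smul_set]
    constructor
    · rintro ⟨y, hy, rfl⟩
      simpa [MulOpposite.smul_eq_mul_unop] using K.mul_mem hy (K.inv_mem hk)
    · intro hx
      exact ⟨x * k, K.mul_mem hx hk, by simp [MulOpposite.smul_eq_mul_unop]⟩
  -- the stabilizer equals the complement (cardinality)
  have cardN : Nat.card N ≠ 0 := Nat.card_pos.ne'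
  have heq : ∀ (K : Subgroup L) (hK : IsComplement' N K),
      K = stabilizer L (mkq K hK) := by
    intro K hK
    refine Subgroup.eq_of_le_of_card_ge (hstab K hK) ?_
    have c1 := hK.card_mul
    have c2 := (isComplement'_stabilizer_of_coprime (α := mkq K hK) hcop).card_mul
    have : Nat.card N * Nat.card (stabilizer L (mkq K hK)) = Nat.card N * Nat.card K := by
      rw [c1, c2]
    exact le_of_eq (Nat.eq_of_mul_eq_mul_left (Nat.pos_of_ne_zero cardN) this)
  obtain ⟨n, hn⟩ := Subgroup.exists_smul_eq hcop α1 α2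
  refine ⟨(↑n)⁻¹, N.inv_mem n.2, ?_⟩
  have : K2 = stabilizer L ((↑n : L) • α1) := by
    rw [show ((↑n : L) • α1) = α2 from hn]
    exact heq K2 h2
  rw [stabilizer_smul_eq_stabilizer_map_conj, ← heq K1 h1] at this
  rw [this]
  ext x
  simp only [mem_conjSub, Subgroup.mem_map, inv_inv]
  constructor
  · intro hx
    exact ⟨(↑n)⁻¹ * x * ↑n, by simpa [mul_assoc] using hx, by simp [MulAut.conj, mul_assoc]⟩
  · rintro ⟨y, hy, rfl⟩
    simpa [MulAut.conj, mul_assoc] using hy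

theorem pi_coprime {π : Set ℕ} {a b : ℕ} (ha : ∀ p : ℕ, p.Prime → p ∣ a → p ∈ π)
    (hb : ∀ p : ℕ, p.Prime → p ∣ b → p ∉ π) : Nat.Coprime a b := by
  by_contra h
  obtain ⟨p, pp, hpa, hpb⟩ := Nat.Prime.not_coprime_iff_dvd.mp h
  exact hb p pp hpb (ha p pp hpa)

theorem map_eq_range {G G' : Type*} [Group G] [Group G'] (f : G →* G') (H : Subgroup G) :
    H.map f = (f.comp H.subtype).range := by
  rw [MonoidHom.range_comp, Subgroup.range_subtype]

theorem card_map_dvd {G G' : Type*} [Group G] [Group G'] [Finite G] (f : G →* G')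
    (H : Subgroup G) : Nat.card (H.map f) ∣ Nat.card H := by
  rw [map_eq_range]
  rw [← Nat.card_congr (QuotientGroup.quotientKerEquivRange (f.comp H.subtype)).toEquiv]
  exact Subgroup.index_dvd_card _

theorem conjSub_normal {G : Type*} [Group G] (T : Subgroup G) [T.Normal] (g : G) :
    conjSub T g = T := by
  ext x
  rw [mem_conjSub]
  constructor
  · intro h
    have hx : x = g⁻¹ * (g * x * g⁻¹) * g := by group
    rw [hx]
    simpa using Subgroup.Normal.conj_mem ‹T.Normal› _ h g⁻¹
  · intro h
    exact Subgroup.Normal.conj_mem ‹T.Normal› _ h g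

theorem orderOf_coe_subgroup {G : Type*} [Group G] {H : Subgroup G} (y : H) :
    orderOf (y : G) = orderOf y :=
  orderOf_injective H.subtype Subtype.coe_injective y

theorem relindex_inf_eq_index {L : Type*} [Group L] [Finite L] (H N : Subgroup L) [N.Normal]
    (h : H ⊔ N = ⊤) : (H ⊓ N).relIndex N = H.index := by
  have ha : Nat.card (H ⊓ N : Subgroup L) ≠ 0 := Nat.card_pos.ne'
  have hm : Nat.card (H ⊓ N : Subgroup L) * (H ⊓ N).relIndex N = Nat.card N := by
    have := Subgroup.card_mul_index ((H ⊓ N).subgroupOf N)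
    rwa [Nat.card_congr (Subgroup.subgroupOfEquivOfLe (inf_le_right : H ⊓ N ≤ N)).toEquiv] at this
  have hh : Nat.card (H ⊓ N : Subgroup L) * ((H ⊓ N).relIndex H) = Nat.card H := by
    have := Subgroup.card_mul_index ((H ⊓ N).subgroupOf H)
    rwa [Nat.card_congr (Subgroup.subgroupOfEquivOfLe (inf_le_left : H ⊓ N ≤ H)).toEquiv] at this
  have hNH : (H ⊓ N).relIndex H = N.index := by
    rw [Subgroup.inf_relIndex_left, ← Subgroup.relIndex_sup_right H N, h,
      Subgroup.relIndex_top_right]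
  have hG1 : Nat.card H * H.index = Nat.card L := Subgroup.card_mul_index H
  have hG2 : Nat.card N * N.index = Nat.card L := Subgroup.card_mul_index N
  -- combine
  have key : Nat.card (H ⊓ N : Subgroup L) * ((H ⊓ N).relIndex N) * N.index
      = Nat.card (H ⊓ N : Subgroup L) * H.index * N.index := by
    rw [hm, hG2, ← hG1, ← hh, hNH]
    ring
  have hNind : N.index ≠ 0 := Subgroup.index_ne_zero_of_finite
  have := Nat.eq_of_mul_eq_mul_right (Nat.pos_of_ne_zero hNind) key
  exact Nat.eq_of_mul_eq_mul_left (Nat.pos_of_ne_zero ha) this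

theorem inf_pi_char {L : Type*} [Group L] [Finite L] (π : Set ℕ) (H N : Subgroup L)
    [N.Normal] [IsMulCommutative N]
    (hc : ∀ p : ℕ, p.Prime → p ∣ Nat.card H → p ∈ π)
    (hi : ∀ p : ℕ, p.Prime → p ∣ H.index → p ∉ π)
    (hs : H ⊔ N = ⊤) (x : L) :
    x ∈ H ⊓ N ↔ x ∈ N ∧ ∀ p : ℕ, p.Prime → p ∣ orderOf x → p ∈ π := by
  constructor
  · rintro ⟨hxH, hxN⟩
    exact ⟨hxN, fun p pp hp => hc p pp (hp.trans (Subgroup.orderOf_dvd_natCard H hxH))⟩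
  · rintro ⟨hxN, hord⟩
    have hc2 : orderOf (⟨x, hxN⟩ : N) = orderOf x := by
      rw [← orderOf_coe_subgroup (⟨x, hxN⟩ : N)]
    have h1 : orderOf ((QuotientGroup.mk' ((H ⊓ N).subgroupOf N)) ⟨x, hxN⟩) ∣ orderOf x := by
      have hd := orderOf_map_dvd (QuotientGroup.mk' ((H ⊓ N).subgroupOf N)) ⟨x, hxN⟩
      rwa [hc2] at hd
    have h2 : orderOf ((QuotientGroup.mk' ((H ⊓ N).subgroupOf N)) ⟨x, hxN⟩) ∣ H.index := by
      rw [← relindex_inf_eq_index H N hs]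
      exact orderOf_dvd_natCard _
    have hcop : Nat.Coprime (orderOf x) H.index :=
      pi_coprime hord hi
    have hone : orderOf ((QuotientGroup.mk' ((H ⊓ N).subgroupOf N)) ⟨x, hxN⟩) = 1 :=
      Nat.eq_one_of_dvd_one (hcop ▸ Nat.dvd_gcd h1 h2)
    have hyb1 : (QuotientGroup.mk' ((H ⊓ N).subgroupOf N)) ⟨x, hxN⟩ = 1 :=
      orderOf_eq_one_iff.mp hone
    exact (QuotientGroup.eq_one_iff (⟨x, hxN⟩ : N)).mp hyb1

theorem orderOf_conj' {G : Type*} [Group G] (x g : G) :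
    orderOf (g * x * g⁻¹) = orderOf x := by
  have h := orderOf_injective (MulAut.conj g).toMonoidHom (MulAut.conj g).injective x
  simpa [MulAut.conj] using h

theorem hall_conj_abelian {L : Type*} [Group L] [Finite L] (π : Set ℕ)
    (N H1 H2 : Subgroup L) [N.Normal] [IsMulCommutative N]
    (h1c : ∀ p : ℕ, p.Prime → p ∣ Nat.card H1 → p ∈ π)
    (h1i : ∀ p : ℕ, p.Prime → p ∣ H1.index → p ∉ π)
    (h2c : ∀ p : ℕ, p.Prime → p ∣ Nat.card H2 → p ∈ π)
    (h2i : ∀ p : ℕ, p.Prime → p ∣ H2.index → p ∉ π)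
    (hs1 : H1 ⊔ N = ⊤) (hs2 : H2 ⊔ N = ⊤) :
    ∃ n ∈ N, conjSub H1 n = H2 := by
  have char1 := inf_pi_char π H1 N h1c h1i hs1
  have char2 := inf_pi_char π H2 N h2c h2i hs2
  have hT2 : H2 ⊓ N = H1 ⊓ N := by
    ext x; rw [char2 x, char1 x]
  haveI hTN : (H1 ⊓ N).Normal := by
    constructor
    intro x hx g
    have hx' := (char1 x).mp hx
    apply (char1 _).mpr
    refine ⟨Subgroup.Normal.conj_mem ‹N.Normal› _ hx'.1 g, fun p pp hp => hx'.2 p pp ?_⟩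
    rwa [orderOf_conj' x g] at hp
  have hmksurj : Function.Surjective (QuotientGroup.mk' (H1 ⊓ N)) :=
    QuotientGroup.mk'_surjective (H1 ⊓ N)
  have hker : (QuotientGroup.mk' (H1 ⊓ N)).ker = H1 ⊓ N := QuotientGroup.ker_mk' (H1 ⊓ N)
  haveI : (N.map (QuotientGroup.mk' (H1 ⊓ N))).Normal :=
    Subgroup.Normal.map ‹N.Normal› _ hmksurj
  haveI : IsMulCommutative (N.map (QuotientGroup.mk' (H1 ⊓ N))) := by
    constructor; constructor
    rintro ⟨a, ha⟩ ⟨b, hb⟩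
    obtain ⟨n, hn, rfl⟩ := ha
    obtain ⟨m, hm, rfl⟩ := hb
    have h0 : (⟨n, hn⟩ : N) * ⟨m, hm⟩ = ⟨m, hm⟩ * ⟨n, hn⟩ :=
      Subtype.ext (Subgroup.mul_comm_of_mem_isMulCommutative N hn hm)
    have hcomm : n * m = m * n := congrArg Subtype.val h0
    apply Subtype.ext
    show (QuotientGroup.mk' (H1 ⊓ N)) n * (QuotientGroup.mk' (H1 ⊓ N)) m
      = (QuotientGroup.mk' (H1 ⊓ N)) m * (QuotientGroup.mk' (H1 ⊓ N)) n
    rw [← map_mul, ← map_mul, hcomm]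
  -- disjointness
  have hdis : ∀ Hi : Subgroup L, Hi ⊓ N = H1 ⊓ N →
      Disjoint (N.map (QuotientGroup.mk' (H1 ⊓ N))) (Hi.map (QuotientGroup.mk' (H1 ⊓ N))) := by
    intro Hi hTi
    rw [disjoint_iff_inf_le]
    rintro x ⟨hxN, hxH⟩
    obtain ⟨n, hn, rfl⟩ := hxN
    obtain ⟨h, hh, hhx⟩ := hxH
    obtain ⟨z, hz, hzn⟩ := (QuotientGroup.mk'_eq_mk' (H1 ⊓ N)).mp hhx
    have hz' : z ∈ Hi ⊓ N := by rw [hTi]; exact hz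
    have hnHi : n ∈ Hi := by
      rw [← hzn]
      exact Hi.mul_mem hh hz'.1
    have hnT : n ∈ H1 ⊓ N := by rw [← hTi]; exact ⟨hnHi, hn⟩
    rw [Subgroup.mem_bot]
    exact (QuotientGroup.eq_one_iff n).mpr hnT
  -- complements
  have hcompl : ∀ Hi : Subgroup L, Hi ⊓ N = H1 ⊓ N → Hi ⊔ N = ⊤ →
      Subgroup.IsComplement' (N.map (QuotientGroup.mk' (H1 ⊓ N)))
        (Hi.map (QuotientGroup.mk' (H1 ⊓ N))) := by
    intro Hi hTi hsi
    apply Subgroup.isComplement'_of_disjoint_and_mul_eq_univ (hdis Hi hTi)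
    have hsup : (N.map (QuotientGroup.mk' (H1 ⊓ N))) ⊔ (Hi.map (QuotientGroup.mk' (H1 ⊓ N))) = ⊤ := by
      rw [← Subgroup.map_sup, sup_comm, hsi]
      exact Subgroup.map_top_of_surjective _ hmksurj
    rw [← Subgroup.normal_mul, hsup, Subgroup.coe_top]
  have c1 := hcompl H1 rfl hs1
  have c2 := hcompl H2 hT2 hs2
  -- coprimality
  have hK1pi : ∀ p : ℕ, p.Prime → p ∣ Nat.card (H1.map (QuotientGroup.mk' (H1 ⊓ N))) → p ∈ π :=
    fun p pp hp => h1c p pp (hp.trans (card_map_dvd _ H1))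
  have hNbpi : ∀ p : ℕ, p.Prime → p ∣ Nat.card (N.map (QuotientGroup.mk' (H1 ⊓ N))) → p ∉ π := by
    intro p pp hp hppi
    haveI : Fintype (N.map (QuotientGroup.mk' (H1 ⊓ N))) := Fintype.ofFinite _
    haveI : Fact p.Prime := ⟨pp⟩
    obtain ⟨xb, hxb⟩ := exists_prime_orderOf_dvd_card (G := (N.map (QuotientGroup.mk' (H1 ⊓ N)))) p
      (by rwa [← Nat.card_eq_fintype_card])
    obtain ⟨n, hn, hnx⟩ := Subgroup.mem_map.mp xb.2
    have hq0 : orderOf n ≠ 0 := (orderOf_pos n).ne'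
    set v := (orderOf n).factorization p with hv
    set m := orderOf n / p ^ v with hmdef
    have hpv : p ^ v ∣ orderOf n := Nat.ordProj_dvd (orderOf n) p
    have hmdvd : m ∣ orderOf n := Nat.div_dvd_of_dvd hpv
    have hm0 : m ≠ 0 := (Nat.ordCompl_pos p hq0).ne'
    have hordnm : orderOf (n ^ m) = p ^ v := by
      rw [orderOf_pow' n hm0, Nat.gcd_comm, Nat.gcd_eq_left hmdvd]
      exact Nat.div_div_self hpv hq0
    have hnmT : n ^ m ∈ H1 ⊓ N := by
      apply (char1 _).mpr
      refine ⟨N.pow_mem hn m, fun r rp hr => ?_⟩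
      rw [hordnm] at hr
      have hrp : r = p := (Nat.prime_dvd_prime_iff_eq rp pp).mp (rp.dvd_of_dvd_pow hr)
      rwa [hrp]
    have hmk1 : QuotientGroup.mk' (H1 ⊓ N) (n ^ m) = 1 := (QuotientGroup.eq_one_iff _).mpr hnmT
    have hmkn : orderOf (QuotientGroup.mk' (H1 ⊓ N) n) = p := by
      rw [hnx, orderOf_coe_subgroup, hxb]
    have hpm : ¬ p ∣ m := Nat.not_dvd_ordCompl pp hq0
    have hfin : orderOf ((QuotientGroup.mk' (H1 ⊓ N) n) ^ m) = p := by
      rw [orderOf_pow' _ hm0, hmkn,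
        Nat.coprime_iff_gcd_eq_one.mp (pp.coprime_iff_not_dvd.mpr hpm), Nat.div_one]
    rw [map_pow] at hmk1
    rw [hmk1, orderOf_one] at hfin
    exact pp.one_lt.ne' hfin.symm
  have hcop : Nat.Coprime (Nat.card (N.map (QuotientGroup.mk' (H1 ⊓ N))))
      (N.map (QuotientGroup.mk' (H1 ⊓ N))).index := by
    rw [Subgroup.IsComplement'.index_eq_card c1.symm]
    exact (pi_coprime hK1pi hNbpi).symm
  obtain ⟨nb, hnbN, hconj⟩ := complement_conj _ _ _ hcop c1 c2
  obtain ⟨n, hnN, rfl⟩ := hnbN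
  refine ⟨n, hnN, ?_⟩
  have hmapeq : (conjSub H1 n).map (QuotientGroup.mk' (H1 ⊓ N)) =
      H2.map (QuotientGroup.mk' (H1 ⊓ N)) := by
    rw [conjSub_map]; exact hconj
  apply Subgroup.map_injective_of_ker_le (QuotientGroup.mk' (H1 ⊓ N)) ?_ ?_ hmapeq
  · rw [hker]
    have h := conjSub_le_of_le (inf_le_left : H1 ⊓ N ≤ H1) n
    rwa [conjSub_normal (H1 ⊓ N) n] at h
  · rw [hker, ← hT2]
    exact inf_le_left

theorem conjSub_one {G : Type*} [Group G] (H : Subgroup G) : conjSub H 1 = H := by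
  ext x; simp [mem_conjSub]

theorem card_lt_of_lt {L : Type*} [Group L] [Finite L] {A B : Subgroup L} (h : A ≤ B)
    (hne : A ≠ B) : Nat.card A < Nat.card B :=
  lt_of_le_of_ne (Subgroup.card_le_of_le h)
    (fun hcard => hne (Subgroup.eq_of_le_of_card_ge h (le_of_eq hcard.symm)))

theorem commutator_ne_self {L : Type*} [Group L] [Finite L] (N : Subgroup L)
    (hsol : IsSolvable N) (hnb : N ≠ ⊥) : ⁅N, N⁆ ≠ N := by
  intro hEq
  have hmap : Subgroup.map N.subtype ⁅(⊤ : Subgroup N), (⊤ : Subgroup N)⁆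
      = Subgroup.map N.subtype ⊤ := by
    rw [Subgroup.map_commutator, ← MonoidHom.range_eq_map, N.range_subtype, hEq]
  have htop : ⁅(⊤ : Subgroup N), (⊤ : Subgroup N)⁆ = ⊤ :=
    Subgroup.map_injective N.subtype_injective hmap
  have hall : ∀ k : ℕ, derivedSeries N k = ⊤ := by
    intro k
    induction k with
    | zero => rfl
    | succ k ih => rw [derivedSeries_succ, ih, htop]
  obtain ⟨k, hk⟩ := hsol
  rw [hall k] at hk
  apply hnb
  rw [eq_bot_iff]
  intro x hx
  have : (⟨x, hx⟩ : N) ∈ (⊥ : Subgroup N) := hk ▸ Subgroup.mem_top _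
  rw [Subgroup.mem_bot] at this
  have : x = 1 := congrArg Subtype.val this
  simpa [this] using Subgroup.one_mem _

universe u

theorem solvable_of_mulEquiv {A B : Type*} [Group A] [Group B] (e : A ≃* B) [Group.IsSolvable A] :
    IsSolvable B :=
  solvable_of_surjective (f := e.toMonoidHom) e.surjective


open scoped commutatorElement in
theorem hall_conj_aux (n : ℕ) : ∀ {L : Type u} [Group L] [Finite L] (π : Set ℕ)
    (N H1 H2 : Subgroup L) [N.Normal], IsSolvable N →
    (∀ p : ℕ, p.Prime → p ∣ Nat.card H1 → p ∈ π) →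
    (∀ p : ℕ, p.Prime → p ∣ H1.index → p ∉ π) →
    (∀ p : ℕ, p.Prime → p ∣ Nat.card H2 → p ∈ π) →
    (∀ p : ℕ, p.Prime → p ∣ H2.index → p ∉ π) →
    H1 ⊔ N = ⊤ → H2 ⊔ N = ⊤ → Nat.card N ≤ n →
    ∃ c ∈ N, conjSub H1 c = H2 := by
  induction n with
  | zero =>
    intro L _ _ π N H1 H2 _ _ _ _ _ _ _ _ hcard
    exact absurd hcard (by simpa using Nat.card_pos.ne')
  | succ n IH =>
    intro L _ _ π N H1 H2 _ hsol h1c h1i h2c h2i hs1 hs2 hcard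
    by_cases hNbot : N = ⊥
    · refine ⟨1, Subgroup.one_mem N, ?_⟩
      rw [conjSub_one]
      subst hNbot
      rw [sup_bot_eq] at hs1 hs2
      rw [hs1, hs2]
    by_cases hcomm : ∀ x ∈ N, ∀ y ∈ N, x * y = y * x
    · haveI : IsMulCommutative N := ⟨⟨fun a b => Subtype.ext (hcomm _ a.2 _ b.2)⟩⟩
      exact hall_conj_abelian π N H1 H2 h1c h1i h2c h2i hs1 hs2
    -- N' := [N,N] is a proper nontrivial normal subgroup
    set N' : Subgroup L := ⁅N, N⁆ with hN'def
    haveI hN'normal : N'.Normal := by rw [hN'def]; infer_instance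
    have hN'le : N' ≤ N := Subgroup.commutator_le.mpr
      (fun g₁ h₁ g₂ h₂ => by
        rw [commutatorElement_def]
        exact N.mul_mem (N.mul_mem (N.mul_mem h₁ h₂) (N.inv_mem h₁)) (N.inv_mem h₂))
    have hN'bot : N' ≠ ⊥ := by
      intro hb
      apply hcomm
      intro x hx y hy
      have hmem : ⁅x, y⁆ ∈ N' := by rw [hN'def]; exact Subgroup.commutator_mem_commutator hx hy
      have : ⁅x, y⁆ ∈ (⊥ : Subgroup L) := hb ▸ hmem
      rw [Subgroup.mem_bot] at this
      exact commutatorElement_eq_one_iff_mul_comm.mp this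
    have hN'ne : N' ≠ N := by rw [hN'def]; exact commutator_ne_self N hsol hNbot
    have hN'card : 2 ≤ Nat.card N' := (Subgroup.one_lt_card_iff_ne_bot N').mpr hN'bot
    have hN'lt : Nat.card N' < Nat.card N := card_lt_of_lt hN'le hN'ne
    -- Step A : quotient by N' = N'
    set f := QuotientGroup.mk' N' with hf
    have hfsurj : Function.Surjective f := QuotientGroup.mk'_surjective _
    have hfker : f.ker = N' := QuotientGroup.ker_mk' _
    haveI : (N.map f).Normal := Subgroup.Normal.map ‹N.Normal› f hfsurj
    haveI : Group.IsSolvable N := hsol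
    have hsolq : IsSolvable (N.map f) := by
      rw [map_eq_range]
      exact solvable_of_surjective (MonoidHom.rangeRestrict_surjective _)
    -- card of the image of N in the quotient
    have hcardq : Nat.card (N.map f) ≤ n := by
      have hker' : (f.comp N.subtype).ker = N'.subgroupOf N := by
        ext x
        simp only [MonoidHom.mem_ker, MonoidHom.comp_apply, Subgroup.mem_subgroupOf]
        rw [← MonoidHom.mem_ker, hfker]
        rfl
      have e1 : Nat.card (N.map f) = Nat.card (N ⧸ (f.comp N.subtype).ker) := by
        rw [map_eq_range]
        exact Nat.card_congr (QuotientGroup.quotientKerEquivRange (f.comp N.subtype)).toEquiv.symm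
      have e2 : Nat.card N = Nat.card (N ⧸ (f.comp N.subtype).ker)
          * Nat.card ((f.comp N.subtype).ker) :=
        Subgroup.card_eq_card_quotient_mul_card_subgroup _
      have e3 : Nat.card ((f.comp N.subtype).ker) = Nat.card N' := by
        rw [hker']
        exact Nat.card_congr (Subgroup.subgroupOfEquivOfLe hN'le).toEquiv
      have hlt : Nat.card (N.map f) < Nat.card N := by
        rw [e1]
        calc Nat.card (N ⧸ (f.comp N.subtype).ker)
            < Nat.card (N ⧸ (f.comp N.subtype).ker) * Nat.card ((f.comp N.subtype).ker) := by
              have hpos : 0 < Nat.card (N ⧸ (f.comp N.subtype).ker) := Nat.card_pos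
              have h2 : 2 ≤ Nat.card ((f.comp N.subtype).ker) := by rw [e3]; exact hN'card
              exact (Nat.lt_mul_iff_one_lt_right hpos).mpr (lt_of_lt_of_le one_lt_two h2)
          _ = Nat.card N := e2.symm
      exact Nat.lt_succ_iff.mp (lt_of_lt_of_le hlt hcard)
    -- apply induction hypothesis in the quotient
    obtain ⟨cb, hcbN, hcb⟩ := IH π (N.map f) (H1.map f) (H2.map f) hsolq
      (fun p pp hp => h1c p pp (hp.trans (card_map_dvd f H1)))
      (fun p pp hp => h1i p pp (hp.trans (Subgroup.index_map_dvd H1 hfsurj)))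
      (fun p pp hp => h2c p pp (hp.trans (card_map_dvd f H2)))
      (fun p pp hp => h2i p pp (hp.trans (Subgroup.index_map_dvd H2 hfsurj)))
      (by rw [← Subgroup.map_sup, hs1]; exact Subgroup.map_top_of_surjective f hfsurj)
      (by rw [← Subgroup.map_sup, hs2]; exact Subgroup.map_top_of_surjective f hfsurj)
      hcardq
    obtain ⟨c, hcN, rfl⟩ := hcbN
    -- P1 := H1^c satisfies P1 ⊔ N' = H2 ⊔ N'
    have hsame : conjSub H1 c ⊔ N' = H2 ⊔ N' := by
      have : (conjSub H1 c).map f = H2.map f := by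
        rw [conjSub_map]
        exact hcb
      have h2' := congrArg (Subgroup.comap f) this
      rwa [Subgroup.comap_map_eq, Subgroup.comap_map_eq, hfker] at h2'
    set M := H2 ⊔ N' with hM
    have hP1M : conjSub H1 c ≤ M := by rw [← hsame]; exact le_sup_left
    have hH2M : H2 ≤ M := le_sup_left
    have hN'M : N' ≤ M := le_sup_right
    -- solvability of N'.subgroupOf M
    haveI : Group.IsSolvable (N'.subgroupOf N) := inferInstance
    haveI hsolN' : Group.IsSolvable N' :=
      solvable_of_mulEquiv (Subgroup.subgroupOfEquivOfLe hN'le)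
    haveI hsolN'M : Group.IsSolvable (N'.subgroupOf M) :=
      solvable_of_mulEquiv (Subgroup.subgroupOfEquivOfLe hN'M).symm
    -- Hall conditions inside M
    have hcard1 : Nat.card ((conjSub H1 c).subgroupOf M) = Nat.card H1 := by
      rw [Nat.card_congr (Subgroup.subgroupOfEquivOfLe hP1M).toEquiv]
      exact conjSub_card H1 c
    have hcard2 : Nat.card (H2.subgroupOf M) = Nat.card H2 :=
      Nat.card_congr (Subgroup.subgroupOfEquivOfLe hH2M).toEquiv
    have hind1 : ((conjSub H1 c).subgroupOf M).index ∣ H1.index := by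
      have := Subgroup.relIndex_dvd_index_of_le hP1M
      rwa [conjSub_index H1 c] at this
    have hind2 : (H2.subgroupOf M).index ∣ H2.index :=
      Subgroup.relIndex_dvd_index_of_le hH2M
    -- sup condition inside M
    have hsupM : ∀ P : Subgroup L, P ≤ M → P ⊔ N' = M →
        P.subgroupOf M ⊔ N'.subgroupOf M = ⊤ := by
      intro P hPM hPsup
      apply Subgroup.map_injective M.subtype_injective
      rw [Subgroup.map_sup, Subgroup.subgroupOf_map_subtype, Subgroup.subgroupOf_map_subtype,
        inf_of_le_left hPM, inf_of_le_left hN'M, hPsup, ← MonoidHom.range_eq_map,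
        M.range_subtype]
    have hNM'card : Nat.card (N'.subgroupOf M) ≤ n := by
      rw [Nat.card_congr (Subgroup.subgroupOfEquivOfLe hN'M).toEquiv]
      exact Nat.lt_succ_iff.mp (lt_of_lt_of_le hN'lt hcard)
    obtain ⟨d', hd'N, hd'⟩ := IH π (N'.subgroupOf M) ((conjSub H1 c).subgroupOf M)
      (H2.subgroupOf M) hsolN'M
      (fun p pp hp => h1c p pp (by rwa [hcard1] at hp))
      (fun p pp hp => h1i p pp (hp.trans hind1))
      (fun p pp hp => h2c p pp (by rwa [hcard2] at hp))
      (fun p pp hp => h2i p pp (hp.trans hind2))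
      (hsupM (conjSub H1 c) hP1M hsame)
      (hsupM H2 hH2M (by rw [hM]))
      hNM'card
    -- push back to L
    have hd'L : (d' : L) ∈ N' := hd'N
    have hmapd := congrArg (Subgroup.map M.subtype) hd'
    rw [conjSub_map, Subgroup.subgroupOf_map_subtype, Subgroup.subgroupOf_map_subtype,
      inf_of_le_left hP1M, inf_of_le_left hH2M] at hmapd
    refine ⟨c * (d' : L), N.mul_mem hcN (hN'le hd'L), ?_⟩
    rw [← conjSub_conjSub]
    exact hmapd

theorem dedekind_mod {G : Type*} [Group G] (H N K : Subgroup G) [N.Normal] (h : H ≤ K) :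
    H ⊔ (N ⊓ K) = (H ⊔ N) ⊓ K := by
  apply le_antisymm
  · exact sup_le (le_inf le_sup_left h)
      (le_inf (le_trans inf_le_left le_sup_right) inf_le_right)
  · rintro x ⟨hxHN, hxK⟩
    have hx' : x ∈ (↑H * ↑N : Set G) := by
      rw [← Subgroup.mul_normal H N]
      exact hxHN
    obtain ⟨a, ha, b, hb, rfl⟩ := hx'
    have hbK : b ∈ K := by
      have : a⁻¹ * (a * b) ∈ K := K.mul_mem (K.inv_mem (h ha)) hxK
      simpa using this
    exact Subgroup.mul_mem_sup ha ⟨hb, hbK⟩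

theorem solvable_subgroupOf {G : Type*} [Group G] (A M : Subgroup G) (hA : IsSolvable A) :
    IsSolvable (A.subgroupOf M) := by
  let φ : (A.subgroupOf M) →* A :=
    { toFun := fun x => ⟨(x : M), x.2⟩
      map_one' := rfl
      map_mul' := fun x y => rfl }
  have hinj : Function.Injective φ := by
    intro x y hxy
    have h2 : ((φ x : A) : G) = ((φ y : A) : G) := congrArg Subtype.val hxy
    exact Subtype.ext (Subtype.ext h2)
  haveI : Group.IsSolvable A := hA
  exact solvable_of_solvable_injective hinj

theorem stmt_18 {G : Type*} [Group G] [Finite G] (π : Set ℕ)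
    (H A : Subgroup G) [A.Normal] (hA : IsSolvable A)
    (hHall : IsPiHall π H)
    (hbar : IsPronormal (H.map (QuotientGroup.mk' A))) :
    IsPronormal H := by
  obtain ⟨hHc, hHi⟩ := hHall
  intro g
  have hker : (QuotientGroup.mk' A).ker = A := QuotientGroup.ker_mk' A
  have hsurj : Function.Surjective (QuotientGroup.mk' A) := QuotientGroup.mk'_surjective A
  obtain ⟨xb, hxbmem, hxb⟩ := hbar (QuotientGroup.mk' A g)
  -- pull back the conjugating element to K := H ⊔ H^g
  have hmemK : xb ∈ (H ⊔ conjSub H g).map (QuotientGroup.mk' A) := by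
    rw [Subgroup.map_sup, conjSub_map]
    exact hxbmem
  obtain ⟨y, hyK, hy⟩ := Subgroup.mem_map.mp hmemK
  have hyconj : (conjSub H y).map (QuotientGroup.mk' A) =
      (conjSub H g).map (QuotientGroup.mk' A) := by
    rw [conjSub_map, conjSub_map, hy, hxb]
  have hsupA : conjSub H y ⊔ A = conjSub H g ⊔ A := by
    have h2' := congrArg (Subgroup.comap (QuotientGroup.mk' A)) hyconj
    rwa [Subgroup.comap_map_eq, Subgroup.comap_map_eq, hker] at h2'
  -- the ambient subgroup L0
  set K := H ⊔ conjSub H g with hK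
  set M0 := conjSub H g ⊔ A with hM0
  set L0 := K ⊓ M0 with hL0
  have hH1K : conjSub H y ≤ K := by
    have h1 := conjSub_le_of_le (le_sup_left : H ≤ K) y
    rwa [conjSub_self_mem hyK] at h1
  have hH2K : conjSub H g ≤ K := le_sup_right
  have hH1M0 : conjSub H y ≤ M0 := by
    rw [← hsupA]
    exact le_sup_left
  have hH2M0 : conjSub H g ≤ M0 := le_sup_left
  have hH1L0 : conjSub H y ≤ L0 := le_inf hH1K hH1M0
  have hH2L0 : conjSub H g ≤ L0 := le_inf hH2K hH2M0
  have hAM0 : A ≤ M0 := le_sup_right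
  have hAL0 : A ⊓ L0 = A ⊓ K := by
    rw [hL0, ← inf_assoc]
    exact inf_of_le_left (le_trans inf_le_left hAM0)
  -- sup conditions inside L0
  have hsup1 : conjSub H y ⊔ (A ⊓ K) = L0 := by
    rw [dedekind_mod _ _ _ hH1K, hsupA, hL0]
    exact inf_comm _ _
  have hsup2 : conjSub H g ⊔ (A ⊓ K) = L0 := by
    rw [dedekind_mod _ _ _ hH2K, ← hM0, hL0]
    exact inf_comm _ _
  have hsubsup : ∀ P : Subgroup G, P ≤ L0 → P ⊔ (A ⊓ K) = L0 →
      P.subgroupOf L0 ⊔ A.subgroupOf L0 = ⊤ := by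
    intro P hPL0 hPsup
    apply Subgroup.map_injective L0.subtype_injective
    rw [Subgroup.map_sup, Subgroup.subgroupOf_map_subtype, Subgroup.subgroupOf_map_subtype,
      inf_of_le_left hPL0, hAL0, hPsup, ← MonoidHom.range_eq_map, L0.range_subtype]
  -- Hall conditions inside L0
  have hcard1 : Nat.card ((conjSub H y).subgroupOf L0) = Nat.card H := by
    rw [Nat.card_congr (Subgroup.subgroupOfEquivOfLe hH1L0).toEquiv]
    exact conjSub_card H y
  have hcard2 : Nat.card ((conjSub H g).subgroupOf L0) = Nat.card H := by
    rw [Nat.card_congr (Subgroup.subgroupOfEquivOfLe hH2L0).toEquiv]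
    exact conjSub_card H g
  have hind1 : ((conjSub H y).subgroupOf L0).index ∣ H.index := by
    have h1 := Subgroup.relIndex_dvd_index_of_le hH1L0
    rwa [conjSub_index H y] at h1
  have hind2 : ((conjSub H g).subgroupOf L0).index ∣ H.index := by
    have h1 := Subgroup.relIndex_dvd_index_of_le hH2L0
    rwa [conjSub_index H g] at h1
  -- apply the Hall conjugacy theorem inside L0
  obtain ⟨c, hcA, hc⟩ := hall_conj_aux (Nat.card (A.subgroupOf L0)) π
    (A.subgroupOf L0) ((conjSub H y).subgroupOf L0) ((conjSub H g).subgroupOf L0)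
    (solvable_subgroupOf A L0 hA)
    (fun p pp hp => hHc p pp (by rwa [hcard1] at hp))
    (fun p pp hp => hHi p pp (hp.trans hind1))
    (fun p pp hp => hHc p pp (by rwa [hcard2] at hp))
    (fun p pp hp => hHi p pp (hp.trans hind2))
    (hsubsup _ hH1L0 hsup1) (hsubsup _ hH2L0 hsup2) (le_refl _)
  -- push the conjugating element back to G
  have hmapc := congrArg (Subgroup.map L0.subtype) hc
  rw [conjSub_map, Subgroup.subgroupOf_map_subtype, Subgroup.subgroupOf_map_subtype,
    inf_of_le_left hH1L0, inf_of_le_left hH2L0] at hmapc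
  refine ⟨y * (c : G), ?_, ?_⟩
  · exact Subgroup.mul_mem _ hyK (inf_le_left (a := K) (b := M0) c.2)
  · rw [← conjSub_conjSub]
    exact hmapc
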